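/- With the notation of the matroid MI_n = (E_n, B_n): every subset I ⊆ E_n with |I| = n+2 and {1,2,3} ⊄ I is an independent set of MI_n (i.e., I is contained in some member of B_n). -/
import Mathlib


open Finset

/-- The ground set `E_n = {1,2,3,4} ∪ X ∪ Y ∪ Z`: the four special points are `Sum.inl 0, …,
Sum.inl 3` (standing for `1,2,3,4`), and `Sum.inr (k, j)` is the `j`-th element of `X`, `Y`, `Z`
for `k = 0, 1, 2` respectively. -/
abbrev MIElt (n : ℕ) := Fin 4 ⊕ (Fin 3 × Fin (n + 1))

/-- `MIXYZ n 0 = X`, `MIXYZ n 1 = Y`, `MIXYZ n 2 = Z`. -/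
def MIXYZ (n : ℕ) (k : Fin 3) : Finset (MIElt n) :=
  (Finset.univ : Finset (Fin (n + 1))).image fun j => Sum.inr (k, j)

/-- `H₁ = {1} ∪ Y ∪ Z`, `H₂ = {2} ∪ X ∪ Z`, `H₃ = {3} ∪ X ∪ Y` (indices shifted to `0,1,2`). -/
def MIH (n : ℕ) (i : Fin 3) : Finset (MIElt n) :=
  insert (Sum.inl i.castSucc) (MIXYZ n (i + 1) ∪ MIXYZ n (i + 2))

/-- `C₁ = {1,4} ∪ X`, `C₂ = {2,4} ∪ Y`, `C₃ = {3,4} ∪ Z` (indices shifted to `0,1,2`). -/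
def MIC (n : ℕ) (i : Fin 3) : Finset (MIElt n) :=
  insert (Sum.inl i.castSucc) (insert (Sum.inl 3) (MIXYZ n i))

/-- The set `{1,2,3}` of special points. -/
def MIT (n : ℕ) : Finset (MIElt n) := {Sum.inl 0, Sum.inl 1, Sum.inl 2}

/-- The collection `B_n` of bases of the matroid `MI_n`. -/
def MIBases (n : ℕ) (B : Finset (MIElt n)) : Prop :=
  B.card = n + 3 ∧ ¬ MIT n ⊆ B ∧ ∀ i : Fin 3, ¬ B ⊆ MIC n i ∧ ¬ B ⊆ MIH n i

/- Auxiliary membership lemmas. -/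

lemma inr_mem_MIXYZ {n : ℕ} {k k' : Fin 3} {m : Fin (n + 1)} :
    Sum.inr (k', m) ∈ MIXYZ n k ↔ k' = k := by
  simp [MIXYZ, eq_comm]

lemma inl_notMem_MIXYZ {n : ℕ} {k : Fin 3} {a : Fin 4} : Sum.inl a ∉ MIXYZ n k := by
  simp [MIXYZ]

lemma card_MIXYZ (n : ℕ) (k : Fin 3) : (MIXYZ n k).card = n + 1 := by
  rw [MIXYZ, Finset.card_image_of_injective _ (by intro a b h; simpa using h)]; simp

lemma inl_mem_MIC {n : ℕ} {i : Fin 3} {a : Fin 4} :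
    Sum.inl a ∈ MIC n i ↔ a = i.castSucc ∨ a = 3 := by
  simp [MIC, inl_notMem_MIXYZ]

lemma inr_mem_MIC {n : ℕ} {i k : Fin 3} {m : Fin (n + 1)} :
    Sum.inr (k, m) ∈ MIC n i ↔ k = i := by
  simp [MIC, inr_mem_MIXYZ]

lemma inl_mem_MIH {n : ℕ} {i : Fin 3} {a : Fin 4} :
    Sum.inl a ∈ MIH n i ↔ a = i.castSucc := by
  simp [MIH, inl_notMem_MIXYZ]

lemma fin3_ne_iff : ∀ i k : Fin 3, (k = i + 1 ∨ k = i + 2) ↔ k ≠ i := by decide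

lemma inr_mem_MIH {n : ℕ} {i k : Fin 3} {m : Fin (n + 1)} :
    Sum.inr (k, m) ∈ MIH n i ↔ k ≠ i := by
  simp [MIH, inr_mem_MIXYZ, ← fin3_ne_iff i k]

lemma castSucc_ne_three : ∀ i : Fin 3, (i.castSucc : Fin 4) ≠ 3 := by decide

lemma fin3_third : ∀ i j k : Fin 3, i ≠ j → k ≠ i → k ≠ j → k = -(i + j) := by decide

/- If `I ⊆ C_j` and `I ⊆ H_i` then `I` is small. -/
lemma MI_contra_CH {n : ℕ} {I : Finset (MIElt n)} {i j : Fin 3}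
    (hC : I ⊆ MIC n j) (hH : I ⊆ MIH n i) (hcard : I.card = n + 2) : False := by
  rcases eq_or_ne j i with rfl | hji
  · have hsub : I ⊆ {Sum.inl j.castSucc} := by
      intro x hx
      have hc := hC hx; have hh := hH hx
      rcases x with a | ⟨k, m⟩
      · rw [inl_mem_MIH] at hh
        simp [hh]
      · rw [inr_mem_MIC] at hc; rw [inr_mem_MIH] at hh; exact absurd hc hh
    have := card_le_card hsub
    simp [hcard] at this
  · have hsub : I ⊆ MIXYZ n j := by
      intro x hx
      have hc := hC hx; have hh := hH hx
      rcases x with a | ⟨k, m⟩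
      · rw [inl_mem_MIC] at hc; rw [inl_mem_MIH] at hh
        rcases hc with rfl | rfl
        · exact absurd (Fin.castSucc_injective _ hh) hji
        · exact absurd hh.symm (castSucc_ne_three i)
      · rw [inr_mem_MIC] at hc; subst hc; exact inr_mem_MIXYZ.mpr rfl
    have := card_le_card hsub
    rw [hcard, card_MIXYZ] at this
    omega

lemma MI_contra_HH {n : ℕ} {I : Finset (MIElt n)} {i j : Fin 3} (hij : i ≠ j)
    (h1 : I ⊆ MIH n i) (h2 : I ⊆ MIH n j) (hcard : I.card = n + 2) : False := by
  have hsub : I ⊆ MIXYZ n (-(i + j)) := by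
    intro x hx
    have ha := h1 hx; have hb := h2 hx
    rcases x with a | ⟨k, m⟩
    · rw [inl_mem_MIH] at ha hb
      exact absurd (Fin.castSucc_injective _ (ha ▸ hb)) hij
    · rw [inr_mem_MIH] at ha hb
      rw [inr_mem_MIXYZ]
      exact fin3_third i j k hij ha hb
  have := card_le_card hsub
  rw [hcard, card_MIXYZ] at this
  omega

lemma MI_contra_CC {n : ℕ} {I : Finset (MIElt n)} {i j : Fin 3} (hij : i ≠ j)
    (h1 : I ⊆ MIC n i) (h2 : I ⊆ MIC n j) (hcard : I.card = n + 2) : False := by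
  have hsub : I ⊆ {Sum.inl 3} := by
    intro x hx
    have ha := h1 hx; have hb := h2 hx
    rcases x with a | ⟨k, m⟩
    · rw [inl_mem_MIC] at ha hb
      rcases ha with rfl | rfl
      · rcases hb with h | h
        · exact absurd (Fin.castSucc_injective _ h) hij
        · exact absurd h (castSucc_ne_three i)
      · simp
    · rw [inr_mem_MIC] at ha hb
      exact absurd (ha.symm.trans hb) hij
  have := card_le_card hsub
  simp [hcard] at this

lemma fin3_succ_ne : ∀ i : Fin 3, i + 1 ≠ i := by decide

lemma inr_notMem_MIT {n : ℕ} {k : Fin 3} {m : Fin (n + 1)} :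
    Sum.inr (k, m) ∉ MIT n := by simp [MIT]

/-- Every subset `I` of `E_n` with `|I| = n + 2` not containing `{1,2,3}` is independent in
`MI_n`, i.e. contained in some basis. -/
theorem MI_small_sets_independent (n : ℕ) (I : Finset (MIElt n))
    (hcard : I.card = n + 2) (hT : ¬ MIT n ⊆ I) :
    ∃ B, MIBases n B ∧ I ⊆ B := by
  by_cases hH : ∃ i, I ⊆ MIH n i
  · obtain ⟨i, hHi⟩ := hH
    set e : MIElt n := Sum.inr (i, 0) with he_def
    have heI : e ∉ I := fun h => (inr_mem_MIH.mp (hHi h)) rfl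
    refine ⟨insert e I, ⟨?_, ?_, fun j => ⟨?_, ?_⟩⟩, subset_insert _ _⟩
    · rw [card_insert_of_notMem heI, hcard]
    · intro h
      apply hT
      intro x hx
      rcases mem_insert.mp (h hx) with rfl | hxI
      · exact absurd hx inr_notMem_MIT
      · exact hxI
    · intro h
      exact MI_contra_CH ((subset_insert e I).trans h) hHi hcard
    · intro h
      rcases eq_or_ne j i with rfl | hji
      · exact (inr_mem_MIH.mp (h (mem_insert_self e I))) rfl
      · exact MI_contra_HH hji.symm hHi ((subset_insert e I).trans h) hcard
  · by_cases hC : ∃ i, I ⊆ MIC n i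
    · obtain ⟨i, hCi⟩ := hC
      set e : MIElt n := Sum.inr (i + 1, 0) with he_def
      have hi1 : i + 1 ≠ i := fin3_succ_ne i
      have heI : e ∉ I := fun h => hi1 (inr_mem_MIC.mp (hCi h))
      refine ⟨insert e I, ⟨?_, ?_, fun j => ⟨?_, ?_⟩⟩, subset_insert _ _⟩
      · rw [card_insert_of_notMem heI, hcard]
      · intro h
        apply hT
        intro x hx
        rcases mem_insert.mp (h hx) with rfl | hxI
        · exact absurd hx inr_notMem_MIT
        · exact hxI
      · intro h
        rcases eq_or_ne j i with rfl | hji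
        · exact hi1 (inr_mem_MIC.mp (h (mem_insert_self e I)))
        · exact MI_contra_CC hji.symm hCi ((subset_insert e I).trans h) hcard
      · intro h
        exact hH ⟨j, (subset_insert e I).trans h⟩
    · have hMITcard : (MIT n).card ≤ 3 := by
        rw [MIT]
        exact (card_insert_le _ _).trans (by
          exact Nat.add_le_add_right ((card_insert_le _ _).trans (by simp)) 1)
      have huniv : (univ : Finset (MIElt n)).card = 3 * n + 7 := by
        rw [card_univ]
        simp [MIElt]
        ring
      have hne : ((univ : Finset (MIElt n)) \ (MIT n ∪ I)).Nonempty := by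
        rw [← card_pos, card_sdiff_of_subset (subset_univ _), huniv]
        have h1 : (MIT n ∪ I).card ≤ 3 + (n + 2) := by
          refine (card_union_le _ _).trans ?_
          omega
        omega
      obtain ⟨e, he⟩ := hne
      rw [mem_sdiff, mem_union] at he
      push_neg at he
      obtain ⟨-, heT, heI⟩ := he
      refine ⟨insert e I, ⟨?_, ?_, fun j => ⟨?_, ?_⟩⟩, subset_insert _ _⟩
      · rw [card_insert_of_notMem heI, hcard]
      · intro h
        apply hT
        intro x hx
        rcases mem_insert.mp (h hx) with rfl | hxI
        · exact absurd hx heT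
        · exact hxI
      · intro h
        exact hC ⟨j, (subset_insert e I).trans h⟩
      · intro h
        exact hH ⟨j, (subset_insert e I).trans h⟩
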